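/- Let G be an abelian Polish group. If A ⊆ G is an F_σ set that is Haar meager, then A is strongly Haar meager. -/

import Mathlib

/-- A set in an abelian Polish group is Haar meager (Darji) if some Borel superset has a
continuous witness function from a nonempty compact metric space all of whose preimages of
translates are meager. -/
def HaarMeager {G : Type*} [AddCommGroup G] [TopologicalSpace G] (A : Set G) : Prop :=
  ∃ B : Set G, A ⊆ B ∧ @MeasurableSet G (borel G) B ∧
    ∃ (K : Type) (_ : MetricSpace K), Nonempty K ∧ CompactSpace K ∧
      ∃ f : K → G, Continuous f ∧ ∀ g : G, IsMeagre (f ⁻¹' ((fun x => x + g) '' B))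

/-- A set is strongly Haar meager if some Borel superset has a compact witness set meeting
every translate in a relatively meager set. -/
def StronglyHaarMeager {G : Type*} [AddCommGroup G] [TopologicalSpace G] (A : Set G) : Prop :=
  ∃ B : Set G, A ⊆ B ∧ @MeasurableSet G (borel G) B ∧
    ∃ C : Set G, C.Nonempty ∧ IsCompact C ∧
      ∀ g : G, IsMeagre (Subtype.val ⁻¹' ((fun x => x + g) '' B) : Set C)

theorem fsigma_haarMeager_is_stronglyHaarMeager {G : Type*} [AddCommGroup G]
    [TopologicalSpace G] [IsTopologicalAddGroup G] [PolishSpace G] (A : Set G)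
    (hFsigma : ∃ f : ℕ → Set G, (∀ n, IsClosed (f n)) ∧ A = ⋃ n, f n)
    (hA : HaarMeager A) : StronglyHaarMeager A := by
    classical
  obtain ⟨B, hAB, -, K, _, hKne, hKcomp, f, hf, hmeag⟩ := hA
  obtain ⟨F, hFcl, hAeq⟩ := hFsigma
  haveI : Nonempty K := hKne
  haveI : CompactSpace K := hKcomp
  refine ⟨A, subset_rfl, ?_, Set.range f, Set.range_nonempty f, isCompact_range hf, ?_⟩
  · letI : MeasurableSpace G := borel G
    haveI : BorelSpace G := ⟨rfl⟩
    rw [hAeq]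
    exact MeasurableSet.iUnion fun n => (hFcl n).measurableSet
  · intro g
    have hFA : ∀ n, F n ⊆ B := fun n => (hAeq ▸ Set.subset_iUnion F n).trans hAB
    have hS : (Subtype.val ⁻¹' ((fun x => x + g) '' A) : Set (Set.range f)) =
        ⋃ n, (Subtype.val ⁻¹' ((fun x => x + g) '' (F n))) := by
      rw [hAeq, Set.image_iUnion, Set.preimage_iUnion]
    rw [hS]
    show (⋃ n, (Subtype.val ⁻¹' ((fun x => x + g) '' (F n)) : Set (Set.range f)))ᶜ ∈ residual _
    rw [Set.compl_iUnion]
    refine (countable_iInter_mem.2 ?_)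
    intro n
    set Sn : Set (Set.range f) := Subtype.val ⁻¹' ((fun x => x + g) '' (F n)) with hSndef
    have hclosed : IsClosed Sn := by
      have h1 : IsClosed ((fun x => x + g) '' (F n)) :=
        (Homeomorph.addRight g).isClosedMap _ (hFcl n)
      exact h1.preimage continuous_subtype_val
    have hint : interior Sn = ∅ := by
      by_contra h
      obtain ⟨x, hx⟩ := Set.nonempty_iff_ne_empty.2 h
      have hnhds : Sn ∈ nhds x := mem_interior_iff_mem_nhds.1 hx
      rw [mem_nhds_subtype] at hnhds
      obtain ⟨t, htx, hts⟩ := hnhds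
      obtain ⟨U, hUt, hUopen, hxU⟩ := mem_nhds_iff.1 htx
      obtain ⟨k, hk⟩ := x.2
      have hWopen : IsOpen (f ⁻¹' U) := hUopen.preimage hf
      have hkW : k ∈ f ⁻¹' U := by simp [Set.mem_preimage, hk, hxU]
      have hWsub : f ⁻¹' U ⊆ f ⁻¹' ((fun x => x + g) '' B) := by
        intro w hw
        have hmem : (⟨f w, Set.mem_range_self w⟩ : Set.range f) ∈ Sn :=
          hts (hUt hw)
        have : f w ∈ (fun x => x + g) '' (F n) := hmem
        exact Set.image_mono (hFA n) this
      have hd : Dense (f ⁻¹' ((fun x => x + g) '' B))ᶜ :=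
        dense_of_mem_residual (hmeag g)
      obtain ⟨w, hw1, hw2⟩ := hd.inter_open_nonempty _ hWopen ⟨k, hkW⟩
      exact hw2 (hWsub hw1)
    have hdense : Dense Snᶜ := interior_eq_empty_iff_dense_compl.1 hint
    exact residual_of_dense_open hclosed.isOpen_compl hdense
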